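/- Let g be a finite-dimensional real Lie algebra and n ⊆ g a nilpotent Lie ideal with dim(g/n) = 1, with centre z := {X ∈ n | ∀ Y ∈ n, [X,Y] = 0}. Assume dim z = 1, [g,z] ≠ {0}, and that there exists a linear functional ℓ on n with {X ∈ n | ∀ Y ∈ n, ℓ([X,Y]) = 0} = z. Then the set of generic points equals the complement of the annihilator of z: {ξ ∈ g* | g(ξ) = {0}} = {ξ ∈ g* | ξ|_z ≠ 0}. -/

import Mathlib

open Polynomial Matrix Finset Module

lemma derivative_finset_prod {ι R : Type*} [DecidableEq ι] [CommSemiring R] (s : Finset ι)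
    (f : ι → R[X]) :
    derivative (∏ i ∈ s, f i) = ∑ i ∈ s, (∏ j ∈ s.erase i, f j) * derivative (f i) := by
  induction s using Finset.induction with
  | empty => simp
  | insert a s ha ih =>
    rw [Finset.prod_insert ha, derivative_mul, ih, Finset.sum_insert ha, Finset.erase_insert ha,
      Finset.mul_sum]
    refine congrArg₂ (· + ·) (mul_comm _ _) (Finset.sum_congr rfl fun i hi => ?_)
    rw [Finset.erase_insert_of_ne (by rintro rfl; exact ha hi),
      Finset.prod_insert (fun h => ha (Finset.mem_of_mem_erase h))]
    ring

lemma det_line_deriv {d : ℕ} (G H : Matrix (Fin d) (Fin d) ℝ) (t : ℝ) :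
    (Matrix.det (Matrix.of fun i j => (C (G i j) + C (H i j) * X : ℝ[X]))).derivative.eval t
      = ∑ i, ((Matrix.of fun a b => G a b + H a b * t).updateCol i (fun r => H r i)).det := by
  rw [Matrix.det_apply', map_sum, eval_finset_sum]
  have key : ∀ σ : Equiv.Perm (Fin d),
      Polynomial.eval t (Polynomial.derivative
          ((↑↑(Equiv.Perm.sign σ) : ℝ[X]) *
            ∏ j : Fin d, Matrix.of (fun i j => C (G i j) + C (H i j) * X) (σ j) j))
        = (↑↑(Equiv.Perm.sign σ) : ℝ) *
            ∑ i : Fin d, (H (σ i) i) * ∏ j ∈ Finset.univ.erase i, (G (σ j) j + H (σ j) j * t) := by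
    intro σ
    rw [derivative_mul, derivative_intCast, zero_mul, zero_add, derivative_finset_prod,
      eval_mul, eval_intCast, eval_finset_sum]
    congr 1
    refine Finset.sum_congr rfl fun i _ => ?_
    simp only [Matrix.of_apply, derivative_add, derivative_C, derivative_C_mul_X, zero_add]
    rw [eval_mul, eval_C, mul_comm]
    congr 1
    rw [eval_prod]
    exact Finset.prod_congr rfl fun j _ => by simp
  rw [Finset.sum_congr rfl fun σ _ => key σ]
  have rhs : ∀ i : Fin d, ((Matrix.of fun a b => G a b + H a b * t).updateCol i
        fun r => H r i).det
      = ∑ σ : Equiv.Perm (Fin d), (↑↑(Equiv.Perm.sign σ) : ℝ) *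
          ((H (σ i) i) * ∏ j ∈ Finset.univ.erase i, (G (σ j) j + H (σ j) j * t)) := by
    intro i
    rw [Matrix.det_apply']
    refine Finset.sum_congr rfl fun σ _ => ?_
    congr 1
    rw [← Finset.mul_prod_erase _ _ (Finset.mem_univ i)]
    congr 1
    · simp [Matrix.updateCol_apply]
    · exact Finset.prod_congr rfl fun j hj => by
        simp [Matrix.updateCol_apply, (Finset.mem_erase.mp hj).1]
  rw [Finset.sum_congr rfl fun i _ => rhs i]
  simp_rw [Finset.mul_sum]
  exact Finset.sum_comm

lemma sum_det_updateColumn {d : ℕ} (G H : Matrix (Fin d) (Fin d) ℝ) :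
    ∑ i, (G.updateCol i (fun r => H r i)).det = Matrix.trace (G.adjugate * H) := by
  have : ∀ i, (G.updateCol i (fun r => H r i)).det
      = (G.adjugate *ᵥ (fun r => H r i)) i := by
    intro i
    rw [← Matrix.cramer_eq_adjugate_mulVec, Matrix.cramer_apply]
  simp only [this, Matrix.trace, Matrix.diag, Matrix.mul_apply, Matrix.mulVec, dotProduct]

lemma trace_adjugate_special {d : ℕ} (G A : Matrix (Fin d) (Fin d) ℝ) (hA : A.trace = 0) :
    Matrix.trace (G.adjugate * (Aᵀ * G + G * A)) = 0 := by
  rw [Matrix.mul_add, Matrix.trace_add]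
  have h1 : Matrix.trace (G.adjugate * (Aᵀ * G)) = G.det * A.trace := by
    rw [Matrix.trace_mul_comm, Matrix.mul_assoc, Matrix.mul_adjugate, ← Matrix.trace_transpose A]
    rw [Matrix.mul_smul, Matrix.mul_one, Matrix.trace_smul, smul_eq_mul, Matrix.trace_transpose]
  have h2 : Matrix.trace (G.adjugate * (G * A)) = G.det * A.trace := by
    rw [← Matrix.mul_assoc, Matrix.adjugate_mul, Matrix.smul_mul, Matrix.one_mul,
      Matrix.trace_smul, smul_eq_mul]
  rw [h1, h2, hA, mul_zero, add_zero]

lemma poly_eval_const (q : ℝ[X]) (h : ∀ t : ℝ, q.eval t ≠ 0 → q.derivative.eval t = 0)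
    (t : ℝ) : q.eval t = q.eval 0 := by
  have hd : q.derivative = 0 := by
    by_contra hd
    have hq : q ≠ 0 := fun h0 => hd (by simp [h0])
    have hfin := Polynomial.finite_setOf_isRoot hq
    have : {t : ℝ | q.IsRoot t}ᶜ.Infinite := Set.Finite.infinite_compl hfin
    have hsub : {t : ℝ | q.IsRoot t}ᶜ ⊆ {t : ℝ | q.derivative.IsRoot t} := by
      intro t ht
      exact h t ht
    exact hd (Polynomial.eq_zero_of_infinite_isRoot _ (this.mono hsub))
  have : q = Polynomial.C (q.coeff 0) :=
    Polynomial.eq_C_of_natDegree_eq_zero (Polynomial.natDegree_eq_zero_of_derivative_eq_zero hd)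
  rw [this]; simp

lemma moore_wolf {N : Type*} [LieRing N] [LieAlgebra ℝ N] [FiniteDimensional ℝ N]
    [LieModule.IsNilpotent N N]
    (Z : N) (hZ0 : Z ≠ 0) (hZc : ∀ y : N, ⁅Z, y⁆ = 0)
    (hcen : ∀ x : N, (∀ y : N, ⁅x, y⁆ = 0) → ∃ s : ℝ, x = s • Z)
    (ℓ : Dual ℝ N) (hℓ : ∀ x : N, (∀ y : N, ℓ ⁅x, y⁆ = 0) → ∀ y : N, ⁅x, y⁆ = 0)
    (ρ : Dual ℝ N) (hρ : ρ Z ≠ 0) :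
    ∀ x : N, (∀ y : N, ρ ⁅x, y⁆ = 0) → ∀ y : N, ⁅x, y⁆ = 0 := by
  obtain ⟨m, hm⟩ := exists_isCompl (ℝ ∙ Z)
  set d := finrank ℝ ↥m with hd
  let b : Basis (Fin d) ℝ ↥m := finBasis ℝ ↥m
  set e : Fin d → N := fun i => (b i : N) with he
  set gram : Dual ℝ N → Matrix (Fin d) (Fin d) ℝ :=
    fun σ => Matrix.of fun i j => σ ⁅e i, e j⁆ with hgram
  have lie_sum' : ∀ (x : N) (f : Fin d → N), ⁅x, ∑ i, f i⁆ = ∑ i, ⁅x, f i⁆ := by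
    intro x f
    calc ⁅x, ∑ i, f i⁆ = LieModule.toEnd ℝ N N x (∑ i, f i) := rfl
      _ = ∑ i, LieModule.toEnd ℝ N N x (f i) := map_sum _ _ _
      _ = ∑ i, ⁅x, f i⁆ := rfl
  have sum_lie' : ∀ (f : Fin d → N) (y : N), ⁅∑ i, f i, y⁆ = ∑ i, ⁅f i, y⁆ := by
    intro f y
    have h : ∀ i, ⁅f i, y⁆ = -⁅y, f i⁆ := fun i => (lie_skew (f i) y).symm
    rw [← lie_skew, lie_sum']
    simp only [h, Finset.sum_neg_distrib]
  -- F0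
  have hspan : ∀ x ∈ (ℝ ∙ Z), ∀ y : N, ⁅x, y⁆ = 0 := by
    intro x hx y
    obtain ⟨s, rfl⟩ := Submodule.mem_span_singleton.mp hx
    rw [smul_lie, hZc, smul_zero]
  have hspan' : ∀ x ∈ (ℝ ∙ Z), ∀ y : N, ⁅y, x⁆ = 0 := by
    intro x hx y
    rw [← lie_skew, hspan x hx y, neg_zero]
  -- F1
  have hdec : ∀ x : N, ∃ (v : Fin d → ℝ) (zc : N), zc ∈ (ℝ ∙ Z) ∧
      x = (∑ i, v i • e i) + zc := by
    intro x
    have hx : x ∈ (ℝ ∙ Z) ⊔ m := by rw [hm.sup_eq_top]; trivial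
    obtain ⟨zc, hzc, xm, hxm, hsum⟩ := Submodule.mem_sup.mp hx
    refine ⟨fun i => b.repr ⟨xm, hxm⟩ i, zc, hzc, ?_⟩
    have h1 : ((∑ i, b.repr ⟨xm, hxm⟩ i • b i : ↥m) : N) = xm := by
      rw [b.sum_repr ⟨xm, hxm⟩]
    have h2 : ((∑ i, b.repr ⟨xm, hxm⟩ i • b i : ↥m) : N) = ∑ i, b.repr ⟨xm, hxm⟩ i • e i := by
      push_cast [he]
      rfl
    rw [← hsum, add_comm]
    conv_lhs => rw [← h1, h2]
  -- F2
  have hrad : ∀ σ : Dual ℝ N, (gram σ).det ≠ 0 →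
      ∀ x : N, (∀ y : N, σ ⁅x, y⁆ = 0) → ∀ y : N, ⁅x, y⁆ = 0 := by
    intro σ hdet x hx
    obtain ⟨v, zc, hzc, hxeq⟩ := hdec x
    have hv : v = 0 := by
      by_contra hv
      apply hdet
      rw [← Matrix.exists_mulVec_eq_zero_iff]
      refine ⟨v, hv, ?_⟩
      funext j
      have hxz : (∑ i, v i • e i) = x - zc := by
        rw [hxeq]; exact (add_sub_cancel_right _ zc).symm
      have hmv : (gram σ).mulVec v j = σ ⁅e j, x - zc⁆ := by
        rw [← hxz, lie_sum']
        simp only [Matrix.mulVec, dotProduct, hgram, Matrix.of_apply, map_sum, lie_smul]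
        exact Finset.sum_congr rfl fun i _ => by
          rw [_root_.map_smul, smul_eq_mul, mul_comm]
      rw [Pi.zero_apply, hmv, lie_sub, map_sub]
      have h1 : σ ⁅e j, x⁆ = 0 := by
        rw [← lie_skew, map_neg, hx (e j), neg_zero]
      have h2 : ⁅e j, zc⁆ = 0 := hspan' zc hzc (e j)
      rw [h1, h2, map_zero, sub_zero]
    rw [hv] at hxeq
    simp only [Pi.zero_apply, zero_smul, Finset.sum_const_zero, zero_add] at hxeq
    rw [hxeq]
    exact hspan zc hzc
  -- F2'
  have hdetℓ : (gram ℓ).det ≠ 0 := by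
    intro hdet
    obtain ⟨v, hv, hmul⟩ := Matrix.exists_mulVec_eq_zero_iff.mpr hdet
    set x : ↥m := ∑ i, v i • b i with hxdef
    have hxc : ((x : N)) = ∑ i, v i • e i := by
      rw [hxdef]; push_cast [he]; rfl
    have hxy : ∀ y : N, ℓ ⁅(x : N), y⁆ = 0 := by
      intro y
      obtain ⟨w, zc, hzc, rfl⟩ := hdec y
      rw [lie_add, map_add, lie_sum']
      have h2 : ℓ ⁅(x : N), zc⁆ = 0 := by rw [hspan' zc hzc]; exact map_zero ℓ
      have h1 : ∀ j, ℓ ⁅(x : N), e j⁆ = 0 := by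
        intro j
        have hh : ℓ ⁅(x : N), e j⁆ = -((gram ℓ).mulVec v j) := by
          rw [hxc, sum_lie']
          simp only [Matrix.mulVec, dotProduct, hgram, Matrix.of_apply, map_sum, smul_lie,
            ← Finset.sum_neg_distrib]
          refine Finset.sum_congr rfl fun i _ => ?_
          rw [_root_.map_smul, ← lie_skew (e j) (e i), map_neg, smul_eq_mul, mul_comm]
          ring
        rw [hh, hmul, Pi.zero_apply, neg_zero]
      rw [map_sum, h2, add_zero]
      refine Finset.sum_eq_zero fun j _ => ?_
      rw [lie_smul, _root_.map_smul, h1, smul_zero]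
    obtain ⟨s, hs⟩ := hcen _ (hℓ _ hxy)
    have hxmem : (x : N) ∈ (ℝ ∙ Z) ⊓ m :=
      ⟨Submodule.mem_span_singleton.mpr ⟨s, hs.symm⟩, x.2⟩
    rw [hm.inf_eq_bot] at hxmem
    have hx0 : x = 0 := Subtype.ext (by simpa using hxmem)
    have := Fintype.linearIndependent_iff.mp b.linearIndependent v (by rw [← hxdef, hx0])
    exact hv (funext this)
  -- F3
  have hsurj : ∀ σ : Dual ℝ N, (gram σ).det ≠ 0 → ∀ η : Dual ℝ N, η Z = 0 →
      ∃ Y : N, ∀ x : N, η x = σ ⁅Y, x⁆ := by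
    intro σ hdet η hη
    set T : N →ₗ[ℝ] Dual ℝ N :=
      (LinearMap.llcomp ℝ N N ℝ σ) ∘ₗ (LieModule.toEnd ℝ N N : N →ₗ[ℝ] Module.End ℝ N) with hTdef
    have hT : ∀ Y x : N, T Y x = σ ⁅Y, x⁆ := by
      intro Y x
      simp [hTdef, LieModule.toEnd_apply_apply]
    have hker : LinearMap.ker T = (ℝ ∙ Z) := by
      ext Y
      rw [LinearMap.mem_ker]
      constructor
      · intro hY
        have hc : ∀ y : N, σ ⁅Y, y⁆ = 0 := by
          intro y
          rw [← hT, hY]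
          rfl
        obtain ⟨s, hs⟩ := hcen Y (hrad σ hdet Y hc)
        exact Submodule.mem_span_singleton.mpr ⟨s, hs.symm⟩
      · intro hY
        ext x
        rw [hT, hspan Y hY x, map_zero]
        rfl
    have hkerrank : finrank ℝ (LinearMap.ker T) = 1 := by
      rw [hker]; exact finrank_span_singleton hZ0
    have hTrank : finrank ℝ (LinearMap.range T) = finrank ℝ N - 1 := by
      have h := T.finrank_range_add_finrank_ker
      rw [hkerrank] at h
      omega
    have hUZ : ∀ η' : Dual ℝ N, η' ∈ LinearMap.ker ((Module.Dual.eval ℝ N) Z) ↔ η' Z = 0 := by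
      intro η'
      rw [LinearMap.mem_ker, Module.Dual.eval_apply]
    have hUrank : finrank ℝ (LinearMap.ker ((Module.Dual.eval ℝ N) Z)) = finrank ℝ N - 1 := by
      have h := ((Module.Dual.eval ℝ N) Z).finrank_range_add_finrank_ker
      rw [Subspace.dual_finrank_eq] at h
      have hrange : LinearMap.range ((Module.Dual.eval ℝ N) Z) = ⊤ := by
        obtain ⟨φ, hφ⟩ : ∃ φ : Dual ℝ N, φ Z ≠ 0 := by
          by_contra hno
          push_neg at hno
          exact hZ0 ((Module.forall_dual_apply_eq_zero_iff ℝ Z).mp hno)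
        rw [LinearMap.range_eq_top]
        intro r
        exact ⟨(r / (φ Z)) • φ, by
          simp [Module.Dual.eval_apply, div_mul_cancel₀ r hφ]⟩
      rw [hrange, finrank_top] at h
      have h1 : finrank ℝ ℝ = 1 := Module.finrank_self ℝ
      omega
    have hrange : LinearMap.range T = LinearMap.ker ((Module.Dual.eval ℝ N) Z) := by
      refine Submodule.eq_of_le_of_finrank_eq ?_ (by rw [hTrank, hUrank])
      rintro χ ⟨Y, rfl⟩
      rw [hUZ]
      show T Y Z = 0
      rw [hT, hspan' Z (Submodule.mem_span_singleton_self Z) Y, map_zero]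
    have hmem2 : η ∈ LinearMap.range T := by rw [hrange, hUZ]; exact hη
    obtain ⟨Y, hY⟩ := hmem2
    exact ⟨Y, fun x => by rw [← hY, hT]⟩
  -- F4
  have htransform : ∀ (σ : Dual ℝ N) (Y : N), ∃ A : Matrix (Fin d) (Fin d) ℝ,
      A.trace = 0 ∧ (Matrix.of fun i j => σ ⁅Y, ⁅e i, e j⁆⁆) = Aᵀ * gram σ + gram σ * A := by
    intro σ Y
    set π := m.linearProjOfIsCompl (ℝ ∙ Z) hm.symm with hπdef
    have hπ : ∀ v y : N, ⁅(π v : N), y⁆ = ⁅v, y⁆ := by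
      intro v y
      have hv : v - (π v : N) ∈ (ℝ ∙ Z) := by
        have h : ((((ℝ ∙ Z).linearProjOfIsCompl m hm) v : N)) + (π v : N) = v :=
          Submodule.projection_add_projection_eq_self hm v
        have h2 : ((((ℝ ∙ Z).linearProjOfIsCompl m hm) v : N)) = v - (π v : N) :=
          eq_sub_iff_add_eq.mpr h
        rw [← h2]
        exact Submodule.coe_mem _
      have h0 := hspan _ hv y
      rw [sub_lie] at h0
      exact (sub_eq_zero.mp h0).symm
    have hπ2 : ∀ v y : N, ⁅y, (π v : N)⁆ = ⁅y, v⁆ := by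
      intro v y
      rw [← lie_skew, hπ, lie_skew]
    set L : ↥m →ₗ[ℝ] ↥m := π ∘ₗ (LieModule.toEnd ℝ N N Y) ∘ₗ m.subtype with hLdef
    have hLapp : ∀ x : ↥m, L x = π ⁅Y, (x : N)⁆ := fun x => rfl
    have hLnil : IsNilpotent L := by
      obtain ⟨K, hK⟩ := LieModule.isNilpotent_toEnd_of_isNilpotent ℝ N N Y
      refine ⟨K + 1, ?_⟩
      have key : ∀ (k : ℕ) (x : ↥m),
          (((L ^ (k + 1)) x : ↥m) : N)
            = (π (((LieModule.toEnd ℝ N N Y) ^ (k + 1)) (x : N)) : N) := by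
        intro k
        induction k with
        | zero => intro x; rw [pow_one, pow_one]; rfl
        | succ k ih =>
          intro x
          have e1 : (((L ^ (k+1+1)) x : ↥m) : N) = ((L ((L ^ (k+1)) x) : ↥m) : N) := by
            rw [pow_succ' L (k+1), Module.End.mul_apply]
          have e2 : ((L ((L ^ (k+1)) x) : ↥m) : N)
              = ((π ⁅Y, (((L ^ (k+1)) x : ↥m) : N)⁆ : ↥m) : N) := by
            rw [hLapp]
          have e3 : ⁅Y, (((L ^ (k+1)) x : ↥m) : N)⁆
              = ⁅Y, ((π (((LieModule.toEnd ℝ N N Y) ^ (k+1)) (x : N)) : ↥m) : N)⁆ := by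
            rw [ih x]
          have e4 : ⁅Y, ((π (((LieModule.toEnd ℝ N N Y) ^ (k+1)) (x : N)) : ↥m) : N)⁆
              = ⁅Y, ((LieModule.toEnd ℝ N N Y) ^ (k+1)) (x : N)⁆ := hπ2 _ _
          have e5 : ⁅Y, ((LieModule.toEnd ℝ N N Y) ^ (k+1)) (x : N)⁆
              = ((LieModule.toEnd ℝ N N Y) ^ (k+1+1)) (x : N) := by
            rw [pow_succ' (LieModule.toEnd ℝ N N Y) (k+1), Module.End.mul_apply]
            rfl
          rw [e1, e2, e3, e4, e5]
      ext x
      have h := key K x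
      rw [pow_succ (LieModule.toEnd ℝ N N Y) K, Module.End.mul_apply, hK,
        LinearMap.zero_apply, map_zero] at h
      simpa using h
    set A := LinearMap.toMatrix b b L with hAdef
    have htr : A.trace = 0 := by
      have h1 : A.trace = LinearMap.trace ℝ ↥m L := (LinearMap.trace_eq_matrix_trace ℝ b L).symm
      rw [h1]
      exact (LinearMap.isNilpotent_trace_of_isNilpotent hLnil).eq_zero
    refine ⟨A, htr, ?_⟩
    have hbasis : ∀ i, ((π ⁅Y, e i⁆ : ↥m) : N) = ∑ k, A k i • e k := by
      intro i
      have h3 : L (b i) = ∑ k, A k i • b k := by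
        conv_lhs => rw [← b.sum_repr (L (b i))]
        exact Finset.sum_congr rfl fun k _ => by rw [hAdef, LinearMap.toMatrix_apply]
      have h4 : ((π ⁅Y, e i⁆ : ↥m) : N) = ((L (b i) : ↥m) : N) := rfl
      rw [h4, h3]
      push_cast
      rfl
    ext i j
    have hlie : σ ⁅Y, ⁅e i, e j⁆⁆ = σ ⁅⁅Y, e i⁆, e j⁆ + σ ⁅e i, ⁅Y, e j⁆⁆ := by
      rw [leibniz_lie Y (e i) (e j), map_add]
    have h1 : σ ⁅⁅Y, e i⁆, e j⁆ = ∑ k, A k i * σ ⁅e k, e j⁆ := by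
      rw [← hπ ⁅Y, e i⁆ (e j), hbasis i, sum_lie', map_sum]
      exact Finset.sum_congr rfl fun k _ => by rw [smul_lie, _root_.map_smul, smul_eq_mul]
    have h2 : σ ⁅e i, ⁅Y, e j⁆⁆ = ∑ k, σ ⁅e i, e k⁆ * A k j := by
      rw [← hπ2 ⁅Y, e j⁆ (e i), hbasis j, lie_sum', map_sum]
      exact Finset.sum_congr rfl fun k _ => by
        rw [lie_smul, _root_.map_smul, smul_eq_mul, mul_comm]
    simp only [Matrix.of_apply, Matrix.add_apply, Matrix.mul_apply, Matrix.transpose_apply, hgram]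
    rw [hlie, h1, h2]
  -- F5
  have hline : ∀ σ η : Dual ℝ N, η Z = 0 → (gram (σ + η)).det = (gram σ).det := by
    intro σ η hη
    set H : Matrix (Fin d) (Fin d) ℝ := Matrix.of fun i j => η ⁅e i, e j⁆ with hH
    set q : ℝ[X] := Matrix.det (Matrix.of fun i j =>
      (C ((gram σ) i j) + C (H i j) * X : ℝ[X])) with hq
    have heval : ∀ t : ℝ, q.eval t = (gram (σ + t • η)).det := by
      intro t
      have h := RingHom.map_det (Polynomial.evalRingHom t)
        (Matrix.of fun i j => (C ((gram σ) i j) + C (H i j) * X : ℝ[X]))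
      rw [hq]
      show (Polynomial.evalRingHom t) _ = _
      rw [h]
      congr 1
      ext i j
      simp only [RingHom.mapMatrix_apply, Matrix.map_apply, Matrix.of_apply, hgram, hH,
        coe_evalRingHom, eval_add, eval_mul, eval_C, eval_X, LinearMap.add_apply,
        LinearMap.smul_apply, smul_eq_mul]
      ring
    have hderiv : ∀ t : ℝ, q.eval t ≠ 0 → q.derivative.eval t = 0 := by
      intro t hqt
      have hdet : (gram (σ + t • η)).det ≠ 0 := by rwa [heval t] at hqt
      obtain ⟨Y, hY⟩ := hsurj _ hdet η hη
      obtain ⟨A, htr, hA⟩ := htransform (σ + t • η) Y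
      have hHA : H = Aᵀ * gram (σ + t • η) + gram (σ + t • η) * A := by
        rw [← hA]
        ext i j
        simp only [Matrix.of_apply, hH]
        exact hY _
      have hGt : (Matrix.of fun a b' => (gram σ) a b' + H a b' * t) = gram (σ + t • η) := by
        ext i j
        simp only [Matrix.of_apply, hgram, hH, LinearMap.add_apply, LinearMap.smul_apply,
          smul_eq_mul]
        ring
      rw [hq, det_line_deriv, hGt, sum_det_updateColumn, hHA, trace_adjugate_special _ _ htr]
    have h10 := poly_eval_const q hderiv 1
    rw [heval 1, heval 0] at h10
    simpa using h10
  -- endgame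
  have hdetρ : (gram ρ).det ≠ 0 := by
    by_cases hd0 : d = 0
    · have hie : IsEmpty (Fin d) := by rw [hd0]; infer_instance
      have h0 : (gram ρ).det = 1 := Matrix.det_isEmpty
      simp [h0]
    · have hne : Nonempty (Fin d) := ⟨⟨0, Nat.pos_of_ne_zero hd0⟩⟩
      have hμ : ℓ Z ≠ 0 := by
        intro hμ0
        have h := hline 0 ℓ hμ0
        rw [zero_add] at h
        have hg0 : gram (0 : Dual ℝ N) = 0 := by
          ext i j; simp [hgram]
        rw [hg0, Matrix.det_zero] at h
        exact hdetℓ h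
      set s := ρ Z / ℓ Z with hs
      have hs0 : s ≠ 0 := div_ne_zero hρ hμ
      have hηZ : (ρ - s • ℓ) Z = 0 := by
        simp only [LinearMap.sub_apply, LinearMap.smul_apply, smul_eq_mul, hs]
        field_simp
        ring
      have hsplit : ρ = s • ℓ + (ρ - s • ℓ) := by abel
      have h1 : (gram ρ).det = (gram (s • ℓ)).det := by
        conv_lhs => rw [hsplit]
        exact hline (s • ℓ) (ρ - s • ℓ) hηZ
      have h2 : gram (s • ℓ) = s • gram ℓ := by
        ext i j
        simp [hgram, smul_eq_mul]
      rw [h1, h2, Matrix.det_smul]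
      exact mul_ne_zero (pow_ne_zero _ hs0) hdetℓ
  exact hrad ρ hdetρ

/-- The centre `{X ∈ n | ∀ Y ∈ n, [X,Y] = 0}` of a Lie ideal `n`, as a submodule of the
ambient Lie algebra `g`. -/
def centreOfIdeal (g : Type*) [LieRing g] [LieAlgebra ℝ g] (n : LieIdeal ℝ g) :
    Submodule ℝ g where
  carrier := {X | X ∈ n ∧ ∀ Y ∈ n, ⁅X, Y⁆ = 0}
  add_mem' := by
    rintro a b ⟨ha, ha'⟩ ⟨hb, hb'⟩
    exact ⟨add_mem ha hb, fun Y hY => by rw [add_lie, ha' Y hY, hb' Y hY, add_zero]⟩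
  zero_mem' := ⟨zero_mem n, fun Y _ => zero_lie Y⟩
  smul_mem' := by
    rintro c x ⟨hx, hx'⟩
    exact ⟨SMulMemClass.smul_mem c hx, fun Y hY => by rw [smul_lie, hx' Y hY, smul_zero]⟩

/-- From the proof of Lemma 3.4, (ii) ⇒ (i-2): under the hypotheses there, the set of generic
linear functionals on `g` (those with trivial coadjoint isotropy) is exactly the set of
functionals not vanishing identically on the centre `z` of `n`. -/
theorem generic_set_eq_compl_annihilator
    (g : Type*) [LieRing g] [LieAlgebra ℝ g] [FiniteDimensional ℝ g]
    (n : LieIdeal ℝ g) [LieModule.IsNilpotent ↥n ↥n]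
    (hcodim : finrank ℝ (g ⧸ n) = 1)
    (hz1 : finrank ℝ (centreOfIdeal g n) = 1)
    (hgz : ∃ X Z : g, Z ∈ centreOfIdeal g n ∧ ⁅X, Z⁆ ≠ 0)
    (hflat : ∃ ℓ : Module.Dual ℝ ↥n,
      {X : ↥n | ∀ Y : ↥n, ℓ ⁅X, Y⁆ = 0} = {X : ↥n | (X : g) ∈ centreOfIdeal g n}) :
    {ξ : Module.Dual ℝ g | ∀ X : g, (∀ Y : g, ξ ⁅X, Y⁆ = 0) → X = 0} =
      {ξ : Module.Dual ℝ g | ∃ Z ∈ centreOfIdeal g n, ξ Z ≠ 0} := by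
  obtain ⟨ℓ, hflat'⟩ := hflat
  have hzmem : ∀ X : g, X ∈ centreOfIdeal g n ↔ X ∈ n ∧ ∀ Y ∈ n, ⁅X, Y⁆ = 0 :=
    fun X => Iff.rfl
  -- a spanning vector of the centre
  obtain ⟨v, hv0, hvspan⟩ := finrank_eq_one_iff'.mp hz1
  set Z₀ : g := (v : g) with hZ₀def
  have hZ₀z : Z₀ ∈ centreOfIdeal g n := v.2
  have hZ₀0 : Z₀ ≠ 0 := fun h => hv0 (Subtype.ext h)
  have hspanz : ∀ w ∈ centreOfIdeal g n, ∃ cst : ℝ, w = cst • Z₀ := by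
    intro w hw
    obtain ⟨cst, hcst⟩ := hvspan ⟨w, hw⟩
    refine ⟨cst, ?_⟩
    have := congrArg Subtype.val hcst
    simpa [eq_comm] using this
  -- the centre is an ideal of g
  have hzideal : ∀ (X : g), ∀ W ∈ centreOfIdeal g n, ⁅X, W⁆ ∈ centreOfIdeal g n := by
    intro X W hW
    obtain ⟨hWn, hWc⟩ := hW
    refine ⟨n.lie_mem hWn, fun Y hY => ?_⟩
    rw [lie_lie, hWc Y hY, lie_zero, hWc ⁅X, Y⁆ (n.lie_mem hY), sub_zero]
  -- W with ⁅W, Z₀⁆ = c • Z₀, c ≠ 0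
  obtain ⟨W, Z', hZ'z, hXZ'⟩ := hgz
  have hZ'Z₀ : ∃ a : ℝ, Z' = a • Z₀ := hspanz Z' hZ'z
  obtain ⟨a, ha⟩ := hZ'Z₀
  obtain ⟨c, hcZ⟩ := hspanz ⁅W, Z₀⁆ (hzideal W Z₀ hZ₀z)
  have hc0 : c ≠ 0 := by
    rintro rfl
    rw [zero_smul] at hcZ
    exact hXZ' (by rw [ha, lie_smul, hcZ, smul_zero])
  have hWn : W ∉ n := by
    intro hWmem
    have h0 : ⁅Z₀, W⁆ = 0 := ((hzmem Z₀).mp hZ₀z).2 W hWmem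
    have h1 : ⁅W, Z₀⁆ = 0 := by rw [← lie_skew, h0, neg_zero]
    rw [hcZ] at h1
    rcases smul_eq_zero.mp h1 with h | h
    · exact hc0 h
    · exact hZ₀0 h
  -- decomposition of g
  have hcodim' : finrank ℝ (g ⧸ LieSubmodule.toSubmodule n) = 1 := hcodim
  have hq : ∀ X : g, ∃ t : ℝ, X - t • W ∈ n := by
    have hmkW : Submodule.Quotient.mk (p := LieSubmodule.toSubmodule n) W ≠ 0 := by
      rw [ne_eq, Submodule.Quotient.mk_eq_zero]
      exact hWn
    have hspanQ : Submodule.span ℝ {Submodule.Quotient.mk (p := LieSubmodule.toSubmodule n) W}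
        = ⊤ := by
      apply Submodule.eq_top_of_finrank_eq
      rw [finrank_span_singleton hmkW, hcodim']
    intro X
    have hmem : Submodule.Quotient.mk (p := LieSubmodule.toSubmodule n) X ∈
        Submodule.span ℝ {Submodule.Quotient.mk (p := LieSubmodule.toSubmodule n) W} := by
      rw [hspanQ]; trivial
    obtain ⟨t, ht⟩ := Submodule.mem_span_singleton.mp hmem
    refine ⟨t, (Submodule.Quotient.eq _).mp ?_⟩
    rw [← ht]
    exact (Submodule.Quotient.mk_smul _ t W).symm
  -- facts about n and its centre
  have hZ₀n : Z₀ ∈ n := ((hzmem Z₀).mp hZ₀z).1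
  set Zn : ↥n := ⟨Z₀, hZ₀n⟩ with hZndef
  have hZn0 : Zn ≠ 0 := fun h => hZ₀0 (congrArg Subtype.val h)
  have hZnc : ∀ y : ↥n, ⁅Zn, y⁆ = 0 := by
    intro y
    apply Subtype.ext
    show ⁅Z₀, (y : g)⁆ = 0
    exact ((hzmem Z₀).mp hZ₀z).2 _ y.2
  have hcen : ∀ x : ↥n, (∀ y : ↥n, ⁅x, y⁆ = 0) → ∃ s : ℝ, x = s • Zn := by
    intro x hx
    have hxz : (x : g) ∈ centreOfIdeal g n := by
      refine ⟨x.2, fun Y hY => ?_⟩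
      exact congrArg Subtype.val (hx ⟨Y, hY⟩)
    obtain ⟨s, hs⟩ := hspanz _ hxz
    exact ⟨s, Subtype.ext hs⟩
  have hℓ : ∀ x : ↥n, (∀ y : ↥n, ℓ ⁅x, y⁆ = 0) → ∀ y : ↥n, ⁅x, y⁆ = 0 := by
    intro x hx y
    have hxmem : x ∈ {X : ↥n | ∀ Y : ↥n, ℓ ⁅X, Y⁆ = 0} := hx
    rw [hflat'] at hxmem
    apply Subtype.ext
    show ⁅(x : g), (y : g)⁆ = 0
    exact hxmem.2 _ y.2
  -- the set equality
  ext ξ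
  simp only [Set.mem_setOf_eq]
  constructor
  · intro hgen
    by_contra hno
    push_neg at hno
    apply hZ₀0
    apply hgen Z₀
    intro Y
    have h1 : ⁅Y, Z₀⁆ ∈ centreOfIdeal g n := hzideal Y Z₀ hZ₀z
    have h2 : ξ ⁅Y, Z₀⁆ = 0 := hno _ h1
    rw [← lie_skew, map_neg, h2, neg_zero]
  · rintro ⟨Zw, hZw, hξZw⟩ X hX
    obtain ⟨aw, haw⟩ := hspanz Zw hZw
    have hξZ₀ : ξ Z₀ ≠ 0 := by
      intro h0
      exact hξZw (by rw [haw, _root_.map_smul, h0, smul_zero])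
    -- step 1 : X ∈ n
    obtain ⟨t, ht⟩ := hq X
    have hbr : ⁅X, Z₀⁆ = (t * c) • Z₀ := by
      have h2 : ⁅X - t • W, Z₀⁆ = 0 := by
        have h3 := ((hzmem Z₀).mp hZ₀z).2 _ ht
        rw [← lie_skew, h3, neg_zero]
      rw [sub_lie, smul_lie, sub_eq_zero] at h2
      rw [h2, hcZ, smul_smul]
    have htzero : t = 0 := by
      have h4 := hX Z₀
      rw [hbr, _root_.map_smul, smul_eq_mul] at h4
      rcases mul_eq_zero.mp h4 with h | h
      · rcases mul_eq_zero.mp h with h' | h'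
        · exact h'
        · exact absurd h' hc0
      · exact absurd h hξZ₀
    rw [htzero, zero_smul, sub_zero] at ht
    -- step 2 : X is central in n, via Moore–Wolf
    set ρ : Module.Dual ℝ ↥n := ξ.comp (LieSubmodule.toSubmodule n).subtype with hρdef
    have hρZ : ρ Zn ≠ 0 := hξZ₀
    set xn : ↥n := ⟨X, ht⟩ with hxndef
    have hxnrad : ∀ y : ↥n, ρ ⁅xn, y⁆ = 0 := by
      intro y
      show ξ ⁅X, (y : g)⁆ = 0
      exact hX _
    have hxcen := moore_wolf Zn hZn0 hZnc hcen ℓ hℓ ρ hρZ xn hxnrad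
    have hXz : X ∈ centreOfIdeal g n := by
      refine ⟨ht, fun Y hY => ?_⟩
      exact congrArg Subtype.val (hxcen ⟨Y, hY⟩)
    obtain ⟨s, hs⟩ := hspanz X hXz
    -- step 3 : conclude X = 0
    have h5 := hX W
    have h6 : ⁅X, W⁆ = -(s * c) • Z₀ := by
      rw [hs, smul_lie, ← lie_skew, hcZ, smul_neg, smul_smul, neg_smul]
    rw [h6, _root_.map_smul, smul_eq_mul] at h5
    rcases mul_eq_zero.mp h5 with h | h
    · have hs0 : s = 0 := by
        rcases mul_eq_zero.mp (neg_eq_zero.mp h) with h' | h'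
        · exact h'
        · exact absurd h' hc0
      rw [hs, hs0, zero_smul]
    · exact absurd h hξZ₀
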